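/- In the setting of James' submodule theorem: let S_σ = kG·𝔲_σn₀𝔟 and S_{σ*} = kG·𝔲_{σ*}n₀𝔟 be submodules of kG𝔟 such that (a) every submodule M of kG𝔟 satisfies S_σ ⊆ M or M ⊆ S_{σ*}^⊥, and (b) ⟨𝔲_σn₀𝔟, 𝔲_{σ*}n₀𝔟⟩ ≠ 0. Then S_σ ∩ S_{σ*}^⊥ is the unique maximal proper kG-submodule of S_σ; in particular the quotient D_σ = S_σ/(S_σ ∩ S_{σ*}^⊥) is a simple kG-module. -/
import Mathlib


/-- James' submodule theorem, abstract form: `V` is a `kG`-module (playing the role of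
`kG𝔟`) with a bilinear form `Φ`, and `S_σ = kG·v`, `S_{σ*} = kG·v*` (with
`v = 𝔲_σn₀𝔟`, `v* = 𝔲_{σ*}n₀𝔟`) satisfy the dichotomy (a) and `⟨v, v*⟩ ≠ 0` (b).
Then `K = S_σ ∩ S_{σ*}^⊥` is the unique maximal proper submodule of `S_σ`, so the
quotient `D_σ = S_σ/K` is a simple `kG`-module. -/
theorem unique_maximal_submodule_of_dichotomy {k G : Type*} [Field k] [Group G] [Fintype G]
    {V : Type*} [AddCommGroup V] [Module k V] [Module (MonoidAlgebra k G) V]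
    [IsScalarTower k (MonoidAlgebra k G) V]
    (Φ : V →ₗ[k] V →ₗ[k] k) (v vstar : V)
    -- (a): the dichotomy holds for every submodule `M` of `V = kG𝔟`
    (ha : ∀ M : Submodule (MonoidAlgebra k G) V,
      Submodule.span (MonoidAlgebra k G) {v} ≤ M ∨
        ∀ m ∈ M, ∀ y ∈ Submodule.span (MonoidAlgebra k G) {vstar}, Φ m y = 0)
    -- (b): `⟨v, v*⟩ ≠ 0`
    (hb : Φ v vstar ≠ 0)
    -- `K = S_σ ∩ S_{σ*}^⊥`
    (K : Submodule (MonoidAlgebra k G) V)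
    (hK : ∀ x, x ∈ K ↔ x ∈ Submodule.span (MonoidAlgebra k G) {v} ∧
      ∀ y ∈ Submodule.span (MonoidAlgebra k G) {vstar}, Φ x y = 0) :
    K < Submodule.span (MonoidAlgebra k G) {v} ∧
      (∀ M : Submodule (MonoidAlgebra k G) V,
        M < Submodule.span (MonoidAlgebra k G) {v} → M ≤ K) ∧
      IsSimpleModule (MonoidAlgebra k G)
        (↥(Submodule.span (MonoidAlgebra k G) {v}) ⧸
          Submodule.comap (Submodule.span (MonoidAlgebra k G) {v}).subtype K) := by
  set S := Submodule.span (MonoidAlgebra k G) {v} with hS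
  have hvS : v ∈ S := Submodule.mem_span_singleton_self v
  have hvstar : vstar ∈ Submodule.span (MonoidAlgebra k G) {vstar} :=
    Submodule.mem_span_singleton_self vstar
  have hKle : K ≤ S := fun x hx => ((hK x).mp hx).1
  have hvK : v ∉ K := fun h => hb (((hK v).mp h).2 vstar hvstar)
  have hlt : K < S := lt_of_le_of_ne hKle (fun h => hvK (h ▸ hvS))
  have hmax : ∀ M : Submodule (MonoidAlgebra k G) V, M < S → M ≤ K := by
    intro M hM
    rcases ha M with h | h
    · exact absurd (le_antisymm hM.le h) hM.ne
    · intro m hm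
      exact (hK m).mpr ⟨hM.le hm, h m hm⟩
  refine ⟨hlt, hmax, ?_⟩
  rw [isSimpleModule_iff_isCoatom]
  constructor
  · intro h
    apply hvK
    have : (⟨v, hvS⟩ : S) ∈ Submodule.comap S.subtype K := h ▸ Submodule.mem_top
    exact this
  · intro N hN
    by_contra hne
    have hmapS : N.map S.subtype ≤ S := by
      rintro _ ⟨x, _, rfl⟩; exact x.2
    have hmaplt : N.map S.subtype < S := by
      refine lt_of_le_of_ne hmapS ?_
      intro h
      apply hne
      rw [eq_top_iff]
      intro x _
      have : (x : V) ∈ N.map S.subtype := by rw [h]; exact x.2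
      rcases this with ⟨y, hy, hxy⟩
      have : y = x := Subtype.ext hxy
      exact this ▸ hy
    have : N.map S.subtype ≤ K := hmax _ hmaplt
    have : N ≤ Submodule.comap S.subtype K := fun x hx =>
      this ⟨x, hx, rfl⟩
    exact lt_irrefl _ (lt_of_lt_of_le hN this)
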